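/- Let $\alpha, y \in \mathbb{R}$ and $m \in \mathbb{N}$, and let $r \in \mathbb{R}$ satisfy $y + e^{r} - 1 > 0$. Then $\frac{d^m}{dr^m}\big[(y + e^{r} - 1)^{\alpha}\big] = \sum_{u=0}^{m} S_2(m,u)\, (\alpha)_u\, (y + e^{r} - 1)^{\alpha - u}\, e^{u r}$, where real powers $w^s$ (for $w > 0$, $s \in \mathbb{R}$) denote $e^{s \ln w}$. -/

import Mathlib

/-- The falling factorial `(α)_u = α (α-1) ⋯ (α-u+1)`. -/
noncomputable def fallingFactorial (a : ℝ) (m : ℕ) : ℝ :=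
  ∏ i ∈ Finset.range m, (a - i)

/-- The Stirling numbers of the second kind
`S₂(n,m) = (1/m!) ∑_{j=0}^{m} (-1)^{m-j} C(m,j) jⁿ`. -/
noncomputable def stirlingSecond (n m : ℕ) : ℝ :=
  (1 / (m.factorial : ℝ)) *
    ∑ j ∈ Finset.range (m + 1), (-1 : ℝ) ^ (m - j) * (m.choose j : ℝ) * (j : ℝ) ^ n

open Finset Real

/-- The numerator sum in the Stirling number formula. -/
noncomputable def Tsum (n m : ℕ) : ℝ :=
  ∑ j ∈ Finset.range (m + 1), (-1 : ℝ) ^ (m - j) * (m.choose j : ℝ) * (j : ℝ) ^ n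

lemma stirlingSecond_eq (n m : ℕ) :
    stirlingSecond n m = (1 / (m.factorial : ℝ)) * Tsum n m := rfl

lemma choose_key (u j : ℕ) :
    (j : ℝ) * (((u+1).choose j : ℕ) : ℝ)
      = ((u:ℝ)+1) * ((((u+1).choose j : ℕ) : ℝ) - ((u.choose j : ℕ) : ℝ)) := by
  rcases j with _ | k
  · simp
  · have h1 : (u+1) * u.choose k = (u+1).choose (k+1) * (k+1) := Nat.add_one_mul_choose_eq u k
    have h2 : (u+1).choose (k+1) = u.choose k + u.choose (k+1) := Nat.choose_succ_succ u k
    have h1' : ((u:ℝ)+1) * (u.choose k : ℝ) = ((u+1).choose (k+1) : ℝ) * ((k:ℝ)+1) := by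
      exact_mod_cast h1
    have h2' : (((u+1).choose (k+1) : ℕ) : ℝ) = (u.choose k : ℝ) + (u.choose (k+1) : ℝ) := by
      exact_mod_cast h2
    push_cast
    rw [h2'] at h1' ⊢
    linarith

lemma Tsum_rec (n u : ℕ) : Tsum (n+1) (u+1) = ((u:ℝ)+1) * (Tsum n (u+1) + Tsum n u) := by
  have step1 : Tsum (n+1) (u+1)
      = ((u:ℝ)+1) * (Tsum n (u+1)
          - ∑ j ∈ range (u+2), (-1:ℝ)^(u+1-j) * (u.choose j : ℝ) * (j:ℝ) ^ n) := by
    unfold Tsum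
    rw [← Finset.sum_sub_distrib, Finset.mul_sum]
    apply Finset.sum_congr rfl
    intro j hj
    have hk := choose_key u j
    rw [pow_succ]
    linear_combination ((-1:ℝ)^(u+1-j) * (j:ℝ)^n) * hk
  have step2 : ∑ j ∈ range (u+2), (-1:ℝ)^(u+1-j) * (u.choose j : ℝ) * (j:ℝ) ^ n
      = - Tsum n u := by
    rw [Finset.sum_range_succ, Nat.choose_succ_self]
    unfold Tsum
    rw [← Finset.sum_neg_distrib]
    simp only [Nat.cast_zero, mul_zero, zero_mul, add_zero]
    apply Finset.sum_congr rfl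
    intro j hj
    have hj' : j ≤ u := Nat.lt_succ_iff.mp (Finset.mem_range.mp hj)
    have : u + 1 - j = (u - j) + 1 := by omega
    rw [this, pow_succ]
    ring
  rw [step1, step2]
  ring

lemma Tsum_zero_base (k : ℕ) : Tsum 0 (k+1) = 0 := by
  unfold Tsum
  have hterm : ∀ j ∈ range (k+2),
      (-1:ℝ)^(k+1-j) * ((k+1).choose j : ℝ) * (j:ℝ)^0
        = (-1:ℝ)^(k+1) * ((-1:ℝ)^j * ((k+1).choose j : ℝ)) := by
    intro j hj
    have hj' : j ≤ k+1 := Nat.lt_succ_iff.mp (Finset.mem_range.mp hj)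
    have h2 : (-1:ℝ)^(k+1) = (-1:ℝ)^(k+1-j) * (-1:ℝ)^j := by
      rw [← pow_add, Nat.sub_add_cancel hj']
    have hsq : (-1:ℝ)^j * (-1:ℝ)^j = 1 := by
      rw [← pow_add, ← two_mul, pow_mul]
      norm_num
    rw [h2, pow_zero]
    calc (-1:ℝ)^(k+1-j) * ((k+1).choose j : ℝ) * 1
        = (-1:ℝ)^(k+1-j) * (((-1:ℝ)^j * (-1:ℝ)^j) * ((k+1).choose j : ℝ)) := by rw [hsq]; ring
      _ = (-1:ℝ)^(k+1-j) * (-1:ℝ)^j * ((-1:ℝ)^j * ((k+1).choose j : ℝ)) := by ring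
  rw [Finset.sum_congr rfl hterm, ← Finset.mul_sum]
  have h0 : (∑ j ∈ range (k+2), ((-1:ℤ)^j * ((k+1).choose j : ℤ))) = 0 :=
    Int.alternating_sum_range_choose_of_ne (Nat.succ_ne_zero k)
  have h0' : (∑ j ∈ range (k+2), ((-1:ℝ)^j * ((k+1).choose j : ℝ))) = 0 := by
    exact_mod_cast h0
  rw [h0', mul_zero]

lemma Tsum_zero (n : ℕ) : ∀ m, n < m → Tsum n m = 0 := by
  induction n with
  | zero =>
    intro m hm
    obtain ⟨k, rfl⟩ := Nat.exists_eq_add_of_lt hm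
    simpa using Tsum_zero_base (0 + k)
  | succ n ih =>
    intro m hm
    obtain ⟨u, rfl⟩ : ∃ u, m = u + 1 := ⟨m - 1, by omega⟩
    rw [Tsum_rec, ih (u+1) (by omega), ih u (by omega)]
    ring

lemma stirling_rec (n u : ℕ) :
    stirlingSecond (n+1) (u+1)
      = ((u:ℝ)+1) * stirlingSecond n (u+1) + stirlingSecond n u := by
  rw [stirlingSecond_eq, stirlingSecond_eq, stirlingSecond_eq, Tsum_rec]
  have hf : (((u+1).factorial : ℕ) : ℝ) = ((u:ℝ)+1) * (u.factorial : ℝ) := by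
    rw [Nat.factorial_succ]; push_cast; ring
  have h0 : (u.factorial : ℝ) ≠ 0 := Nat.cast_ne_zero.mpr u.factorial_ne_zero
  have h1 : ((u:ℝ)+1) ≠ 0 := by positivity
  rw [hf]
  field_simp

lemma stirling_succ_zero (n : ℕ) : stirlingSecond (n+1) 0 = 0 := by
  simp [stirlingSecond]

lemma ff_succ (a : ℝ) (u : ℕ) :
    fallingFactorial a (u+1) = fallingFactorial a u * (a - u) :=
  Finset.prod_range_succ _ _

/-- The closed-form derivative from the proof of the paper's Theorem 4.9:
`dᵐ/drᵐ (y + eʳ - 1)^α`, where `^` denotes the real power `Real.rpow`. -/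
theorem iteratedDeriv_rpow_exp (α y : ℝ) (m : ℕ) (r : ℝ)
    (hyr : 0 < y + Real.exp r - 1) :
    iteratedDeriv m (fun s => (y + Real.exp s - 1) ^ α) r =
      ∑ u ∈ Finset.range (m + 1),
        stirlingSecond m u * fallingFactorial α u *
          (y + Real.exp r - 1) ^ (α - u) * Real.exp (u * r) := by
  induction m generalizing r with
  | zero =>
    simp [iteratedDeriv_zero, stirlingSecond, fallingFactorial]
  | succ m ih =>
    rw [iteratedDeriv_succ]
    set F : ℝ → ℝ := fun s => ∑ u ∈ Finset.range (m+1),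
        stirlingSecond m u * fallingFactorial α u *
          (y + Real.exp s - 1) ^ (α - u) * Real.exp (u * s) with hF
    have hopen : IsOpen {s : ℝ | 0 < y + Real.exp s - 1} :=
      isOpen_lt continuous_const (by continuity)
    have hev : iteratedDeriv m (fun s => (y + Real.exp s - 1) ^ α) =ᶠ[nhds r] F := by
      filter_upwards [hopen.mem_nhds hyr] with s hs using ih s hs
    rw [hev.deriv_eq]
    have hD : HasDerivAt F (∑ u ∈ Finset.range (m+1),
        stirlingSecond m u * fallingFactorial α u *
          ((Real.exp r * (α - u) * (y + Real.exp r - 1) ^ (α - u - 1)) * Real.exp (u * r)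
            + (y + Real.exp r - 1) ^ (α - u) * (Real.exp (u * r) * u))) r := by
      apply HasDerivAt.fun_sum
      intro u hu
      have hg : HasDerivAt (fun s => y + Real.exp s - 1) (Real.exp r) r :=
        ((Real.hasDerivAt_exp r).const_add y).sub_const 1
      have h1 : HasDerivAt (fun s => (y + Real.exp s - 1) ^ (α - u))
          (Real.exp r * (α - u) * (y + Real.exp r - 1) ^ (α - u - 1)) r :=
        hg.rpow_const (Or.inl (ne_of_gt hyr))
      have h2 : HasDerivAt (fun s => Real.exp ((u:ℝ) * s)) (Real.exp ((u:ℝ) * r) * u) r := by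
        simpa using ((hasDerivAt_id r).const_mul (u:ℝ)).exp
      have h3 := (h1.mul h2).const_mul (stirlingSecond m u * fallingFactorial α u)
      simpa [mul_assoc] using h3
    rw [hD.deriv]
    -- now the combinatorial identity
    have key : ∀ u : ℕ,
        stirlingSecond m u * fallingFactorial α u *
          ((Real.exp r * (α - u) * (y + Real.exp r - 1) ^ (α - u - 1)) * Real.exp (u * r)
            + (y + Real.exp r - 1) ^ (α - u) * (Real.exp (u * r) * u))
        = stirlingSecond m u * fallingFactorial α (u+1) *
            (y + Real.exp r - 1) ^ (α - ((u:ℝ)+1)) * Real.exp (((u:ℝ)+1) * r)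
          + (u:ℝ) * (stirlingSecond m u * fallingFactorial α u *
            (y + Real.exp r - 1) ^ (α - u) * Real.exp (u * r)) := by
      intro u
      rw [ff_succ, show α - ((u:ℝ)+1) = α - u - 1 from by ring,
        show ((u:ℝ)+1) * r = (u:ℝ) * r + r from by ring, Real.exp_add]
      ring
    rw [Finset.sum_congr rfl (fun u _ => key u), Finset.sum_add_distrib]
    -- RHS: peel off the u = 0 term
    rw [Finset.sum_range_succ' (fun u => stirlingSecond (m+1) u * fallingFactorial α u *
          (y + Real.exp r - 1) ^ (α - u) * Real.exp (u * r)) (m+1)]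
    have hz : stirlingSecond (m+1) 0 * fallingFactorial α 0 *
        (y + Real.exp r - 1) ^ (α - (0:ℕ)) * Real.exp ((0:ℕ) * r) = 0 := by
      rw [stirling_succ_zero]; ring
    rw [hz, add_zero]
    have hsplit : ∀ i : ℕ,
        stirlingSecond (m+1) (i+1) * fallingFactorial α (i+1) *
          (y + Real.exp r - 1) ^ (α - ((i+1:ℕ):ℝ)) * Real.exp (((i+1:ℕ):ℝ) * r)
        = stirlingSecond m i * fallingFactorial α (i+1) *
            (y + Real.exp r - 1) ^ (α - ((i:ℝ)+1)) * Real.exp (((i:ℝ)+1) * r)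
          + ((i:ℝ)+1) * (stirlingSecond m (i+1) * fallingFactorial α (i+1) *
            (y + Real.exp r - 1) ^ (α - ((i+1:ℕ):ℝ)) * Real.exp (((i+1:ℕ):ℝ) * r)) := by
      intro i
      rw [stirling_rec]
      push_cast
      ring
    rw [Finset.sum_congr rfl (fun i _ => hsplit i), Finset.sum_add_distrib]
    have h2 : (∑ u ∈ Finset.range (m+1), (u:ℝ) * (stirlingSecond m u * fallingFactorial α u *
          (y + Real.exp r - 1) ^ (α - u) * Real.exp (u * r)))
        = ∑ i ∈ Finset.range (m+1), ((i:ℝ)+1) * (stirlingSecond m (i+1) * fallingFactorial α (i+1) *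
          (y + Real.exp r - 1) ^ (α - ((i+1:ℕ):ℝ)) * Real.exp (((i+1:ℕ):ℝ) * r)) := by
      set k : ℕ → ℝ := fun u => (u:ℝ) * (stirlingSecond m u * fallingFactorial α u *
          (y + Real.exp r - 1) ^ (α - u) * Real.exp (u * r)) with hk
      have hgoal1 : ∑ u ∈ Finset.range (m+1), k u = ∑ u ∈ Finset.range (m+2), k u := by
        conv_rhs => rw [Finset.sum_range_succ]
        have : k (m+1) = 0 := by
          simp only [hk, stirlingSecond_eq, Tsum_zero m (m+1) (Nat.lt_succ_self m)]
          ring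
        rw [this, add_zero]
      have hgoal2 : ∑ u ∈ Finset.range (m+2), k u = ∑ i ∈ Finset.range (m+1), k (i+1) := by
        rw [Finset.sum_range_succ' k (m+1)]
        have : k 0 = 0 := by simp [hk]
        rw [this, add_zero]
      rw [hgoal1, hgoal2]
      apply Finset.sum_congr rfl
      intro i _
      simp only [hk]
      push_cast
      ring
    rw [h2]
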